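/- The multiplication on A_{0,3} given on basis elements G_n, n ∈ ℤ, by G_nG_m = G_{n+m} + α²G_{n+m-2} if n,m are both odd and G_nG_m = G_{n+m} otherwise, is commutative and associative, and G_0 is a unit. -/

import Mathlib

/-- The multiplication of `A_{0,3}`, the free ℂ-module on basis `{G_n : n ∈ ℤ}`
(with `G_n` modeled by `Finsupp.single n 1`), determined on basis elements by
`G_n G_m = G_{n+m} + α²G_{n+m-2}` if `n, m` are both odd, and `G_n G_m = G_{n+m}`
otherwise. -/
noncomputable def gmul (α : ℂ) (u v : ℤ →₀ ℂ) : ℤ →₀ ℂ :=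
  u.sum fun n c => v.sum fun m d =>
    if Odd n ∧ Odd m then
      Finsupp.single (n + m) (c * d) + Finsupp.single (n + m - 2) (α ^ 2 * (c * d))
    else Finsupp.single (n + m) (c * d)

lemma gmul_zero_left (α : ℂ) (v : ℤ →₀ ℂ) : gmul α 0 v = 0 := by simp [gmul]

lemma gmul_zero_right (α : ℂ) (u : ℤ →₀ ℂ) : gmul α u 0 = 0 := by simp [gmul]

lemma gmul_add_left (α : ℂ) (u u' v : ℤ →₀ ℂ) :
    gmul α (u + u') v = gmul α u v + gmul α u' v := by
  unfold gmul
  rw [Finsupp.sum_add_index]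
  · intro n _; simp
  · intro n _ c c'
    rw [← Finsupp.sum_add]
    apply Finsupp.sum_congr
    intro m _
    split_ifs
    · rw [add_mul, mul_add, Finsupp.single_add, Finsupp.single_add]; abel
    · rw [add_mul, Finsupp.single_add]

lemma gmul_add_right (α : ℂ) (u v v' : ℤ →₀ ℂ) :
    gmul α u (v + v') = gmul α u v + gmul α u v' := by
  unfold gmul
  rw [← Finsupp.sum_add]
  apply Finsupp.sum_congr
  intro n _
  rw [Finsupp.sum_add_index]
  · intro m _; simp
  · intro m _ d d'
    split_ifs
    · rw [mul_add, mul_add, Finsupp.single_add, Finsupp.single_add]; abel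
    · rw [mul_add, Finsupp.single_add]

lemma gmul_single_single (α : ℂ) (n m : ℤ) (c d : ℂ) :
    gmul α (Finsupp.single n c) (Finsupp.single m d) =
      if Odd n ∧ Odd m then
        Finsupp.single (n + m) (c * d) + Finsupp.single (n + m - 2) (α ^ 2 * (c * d))
      else Finsupp.single (n + m) (c * d) := by
  unfold gmul
  rw [Finsupp.sum_single_index, Finsupp.sum_single_index] <;> simp

lemma ss_odd (α : ℂ) {n m : ℤ} (hn : Odd n) (hm : Odd m) (c d : ℂ) :
    gmul α (Finsupp.single n c) (Finsupp.single m d) =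
      Finsupp.single (n + m) (c * d) + Finsupp.single (n + m - 2) (α ^ 2 * (c * d)) := by
  rw [gmul_single_single, if_pos ⟨hn, hm⟩]

lemma ss_even (α : ℂ) {n m : ℤ} (h : ¬(Odd n ∧ Odd m)) (c d : ℂ) :
    gmul α (Finsupp.single n c) (Finsupp.single m d) = Finsupp.single (n + m) (c * d) := by
  rw [gmul_single_single, if_neg h]

lemma odd_OO {n m : ℤ} (hn : Odd n) (hm : Odd m) : ¬Odd (n + m) := by
  simp only [Int.odd_iff] at *; omega

lemma odd_OE {n m : ℤ} (hn : Odd n) (hm : ¬Odd m) : Odd (n + m) := by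
  simp only [Int.odd_iff] at *; omega

lemma odd_EO {n m : ℤ} (hn : ¬Odd n) (hm : Odd m) : Odd (n + m) := by
  simp only [Int.odd_iff] at *; omega

lemma odd_EE {n m : ℤ} (hn : ¬Odd n) (hm : ¬Odd m) : ¬Odd (n + m) := by
  simp only [Int.odd_iff] at *; omega

lemma odd_sub_two' {n : ℤ} : Odd (n - 2) ↔ Odd n := by
  simp only [Int.odd_iff]; omega

lemma gmul_comm_single (α : ℂ) (n m : ℤ) (c d : ℂ) :
    gmul α (Finsupp.single n c) (Finsupp.single m d)
      = gmul α (Finsupp.single m d) (Finsupp.single n c) := by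
  by_cases hn : Odd n <;> by_cases hm : Odd m
  · rw [ss_odd α hn hm, ss_odd α hm hn, add_comm n m, mul_comm c d]
  · rw [ss_even α (fun h => hm h.2), ss_even α (fun h => hm h.1), add_comm n m, mul_comm c d]
  · rw [ss_even α (fun h => hn h.1), ss_even α (fun h => hn h.2), add_comm n m, mul_comm c d]
  · rw [ss_even α (fun h => hn h.1), ss_even α (fun h => hn h.2), add_comm n m, mul_comm c d]

lemma gmul_assoc_single (α : ℂ) (n m k : ℤ) (c d e : ℂ) :
    gmul α (gmul α (Finsupp.single n c) (Finsupp.single m d)) (Finsupp.single k e)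
      = gmul α (Finsupp.single n c) (gmul α (Finsupp.single m d) (Finsupp.single k e)) := by
  by_cases hn : Odd n <;> by_cases hm : Odd m <;> by_cases hk : Odd k
  · -- O O O
    rw [ss_odd α hn hm, gmul_add_left,
        ss_even α (fun h => odd_OO hn hm h.1),
        ss_even α (fun h => odd_OO hn hm (odd_sub_two'.mp h.1)),
        ss_odd α hm hk, gmul_add_right,
        ss_even α (fun h => odd_OO hm hk h.2),
        ss_even α (fun h => odd_OO hm hk (odd_sub_two'.mp h.2))]
    ring_nf
  · -- O O E
    rw [ss_odd α hn hm, gmul_add_left,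
        ss_even α (fun h => odd_OO hn hm h.1),
        ss_even α (fun h => odd_OO hn hm (odd_sub_two'.mp h.1)),
        ss_even α (fun h => hk h.2), ss_odd α hn (odd_OE hm hk)]
    ring_nf
  · -- O E O
    rw [ss_even α (fun h => hm h.2), ss_odd α (odd_OE hn hm) hk,
        ss_even α (fun h => hm h.1), ss_odd α hn (odd_EO hm hk)]
    ring_nf
  · -- O E E
    rw [ss_even α (fun h => hm h.2), ss_even α (fun h => hk h.2),
        ss_even α (fun h => hm h.1), ss_even α (fun h => odd_EE hm hk h.2)]
    ring_nf
  · -- E O O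
    rw [ss_even α (fun h => hn h.1), ss_odd α (odd_EO hn hm) hk,
        ss_odd α hm hk, gmul_add_right,
        ss_even α (fun h => hn h.1), ss_even α (fun h => hn h.1)]
    ring_nf
  · -- E O E
    rw [ss_even α (fun h => hn h.1), ss_even α (fun h => hk h.2),
        ss_even α (fun h => hk h.2), ss_even α (fun h => hn h.1)]
    ring_nf
  · -- E E O
    rw [ss_even α (fun h => hn h.1), ss_even α (fun h => odd_EE hn hm h.1),
        ss_even α (fun h => hm h.1), ss_even α (fun h => hn h.1)]
    ring_nf
  · -- E E E
    rw [ss_even α (fun h => hn h.1), ss_even α (fun h => hk h.2),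
        ss_even α (fun h => hm h.1), ss_even α (fun h => hn h.1)]
    ring_nf

lemma gmul_comm_single_left (α : ℂ) (n : ℤ) (c : ℂ) (v : ℤ →₀ ℂ) :
    gmul α (Finsupp.single n c) v = gmul α v (Finsupp.single n c) := by
  induction v using Finsupp.induction with
  | zero => rw [gmul_zero_left, gmul_zero_right]
  | single_add m d v _ _ ih =>
    rw [gmul_add_left, gmul_add_right, ih, gmul_comm_single]

lemma gmul_comm (α : ℂ) (u v : ℤ →₀ ℂ) : gmul α u v = gmul α v u := by
  induction u using Finsupp.induction with
  | zero => rw [gmul_zero_left, gmul_zero_right]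
  | single_add n c u _ _ ih =>
    rw [gmul_add_left, gmul_add_right, ih, gmul_comm_single_left]

lemma gmul_assoc_ssw (α : ℂ) (n m : ℤ) (c d : ℂ) (w : ℤ →₀ ℂ) :
    gmul α (gmul α (Finsupp.single n c) (Finsupp.single m d)) w
      = gmul α (Finsupp.single n c) (gmul α (Finsupp.single m d) w) := by
  induction w using Finsupp.induction with
  | zero => rw [gmul_zero_right, gmul_zero_right, gmul_zero_right]
  | single_add k e w _ _ ih =>
    rw [gmul_add_right, gmul_add_right, gmul_add_right, ih, gmul_assoc_single]

lemma gmul_assoc_svw (α : ℂ) (n : ℤ) (c : ℂ) (v w : ℤ →₀ ℂ) :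
    gmul α (gmul α (Finsupp.single n c) v) w
      = gmul α (Finsupp.single n c) (gmul α v w) := by
  induction v using Finsupp.induction with
  | zero => simp [gmul_zero_left, gmul_zero_right]
  | single_add m d v _ _ ih =>
    rw [gmul_add_right, gmul_add_left, gmul_add_left, gmul_add_right, ih, gmul_assoc_ssw]

lemma gmul_assoc (α : ℂ) (u v w : ℤ →₀ ℂ) :
    gmul α (gmul α u v) w = gmul α u (gmul α v w) := by
  induction u using Finsupp.induction with
  | zero => rw [gmul_zero_left, gmul_zero_left, gmul_zero_left]
  | single_add n c u _ _ ih =>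
    rw [gmul_add_left, gmul_add_left, gmul_add_left, ih, gmul_assoc_svw]

lemma gmul_one_left (α : ℂ) (u : ℤ →₀ ℂ) : gmul α (Finsupp.single 0 1) u = u := by
  induction u using Finsupp.induction with
  | zero => exact gmul_zero_right α _
  | single_add m d u _ _ ih =>
    rw [gmul_add_right, ih, ss_even α (fun h => (by decide : ¬Odd (0 : ℤ)) h.1)]
    rw [zero_add, one_mul]

/-- the multiplication of `A_{0,3}` is commutative and associative,
and `G_0` is a unit. -/
theorem stmt_18 (α : ℂ) :
    (∀ u v : ℤ →₀ ℂ, gmul α u v = gmul α v u) ∧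
    (∀ u v w : ℤ →₀ ℂ, gmul α (gmul α u v) w = gmul α u (gmul α v w)) ∧
    (∀ u : ℤ →₀ ℂ, gmul α (Finsupp.single 0 1) u = u ∧ gmul α u (Finsupp.single 0 1) = u) := by
  refine ⟨gmul_comm α, gmul_assoc α, fun u => ⟨gmul_one_left α u, ?_⟩⟩
  rw [gmul_comm, gmul_one_left]
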